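/- Suppose the two components of the spherically symmetric divergence (dilaton) constraint hold on I with E nonvanishing, namely A'/A − (rE)'/(rE) = 2B²/(r(B²+r²S²)) and A'/A + 2ρ'/ρ + (B²+r²S²)'/(B²+r²S²) = −2rS²/(B²+r²S²) on I, and let c_e denote the constant value of r³ρ²(B²+r²S²)E. Then for all r ∈ I: B(r)² = (c_e/(2r²ρ(r)²E(r)))·(A'/A − (rE)'/(rE)) and S(r)² = −(c_e/(2r⁴ρ(r)²E(r)))·(A'/A − (r³E)'/(r³E)). -/

import Mathlib

open Real Filter Topology Set

/-- On an open interval `I = (a,b) ⊆ (0,∞)`, assume the two components of the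
spherically symmetric divergence (dilaton) constraint with `E ≠ 0`, and let `c_e` be the constant
value of `r³ρ²(B²+r²S²)E`. Then
`B² = (c_e/(2r²ρ²E))·(A'/A − (rE)'/(rE))` and
`S² = −(c_e/(2r⁴ρ²E))·(A'/A − (r³E)'/(r³E))`. -/
theorem dilaton_constraint_B_S_formulas
    (a b : ℝ) (ha : 0 ≤ a)
    (A B ρ E S : ℝ → ℝ) (c_e : ℝ)
    (hA : ∀ r ∈ Ioo a b, DifferentiableAt ℝ A r)
    (hB : ∀ r ∈ Ioo a b, DifferentiableAt ℝ B r)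
    (hρ : ∀ r ∈ Ioo a b, DifferentiableAt ℝ ρ r)
    (hE : ∀ r ∈ Ioo a b, DifferentiableAt ℝ E r)
    (hS : ∀ r ∈ Ioo a b, DifferentiableAt ℝ S r)
    (hApos : ∀ r ∈ Ioo a b, 0 < A r)
    (hBpos : ∀ r ∈ Ioo a b, 0 < B r)
    (hρpos : ∀ r ∈ Ioo a b, 0 < ρ r)
    (hEne : ∀ r ∈ Ioo a b, E r ≠ 0)
    (hBS : ∀ r ∈ Ioo a b, 0 < B r ^ 2 + r ^ 2 * S r ^ 2)
    (hconstr1 : ∀ r ∈ Ioo a b,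
      deriv A r / A r - deriv (fun s => s * E s) r / (r * E r)
        = 2 * B r ^ 2 / (r * (B r ^ 2 + r ^ 2 * S r ^ 2)))
    (hconstr2 : ∀ r ∈ Ioo a b,
      deriv A r / A r + 2 * deriv ρ r / ρ r
          + deriv (fun s => B s ^ 2 + s ^ 2 * S s ^ 2) r / (B r ^ 2 + r ^ 2 * S r ^ 2)
        = -(2 * r * S r ^ 2) / (B r ^ 2 + r ^ 2 * S r ^ 2))
    (hce : ∀ r ∈ Ioo a b,
      r ^ 3 * ρ r ^ 2 * (B r ^ 2 + r ^ 2 * S r ^ 2) * E r = c_e) :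
    ∀ r ∈ Ioo a b,
      B r ^ 2 = c_e / (2 * r ^ 2 * ρ r ^ 2 * E r)
          * (deriv A r / A r - deriv (fun s => s * E s) r / (r * E r)) ∧
      S r ^ 2 = -(c_e / (2 * r ^ 4 * ρ r ^ 2 * E r))
          * (deriv A r / A r - deriv (fun s => s ^ 3 * E s) r / (r ^ 3 * E r)) := by
  intro r hr
  obtain ⟨hra, hrb⟩ := hr
  have hr0 : 0 < r := lt_of_le_of_lt ha hra
  have hrne : r ≠ 0 := ne_of_gt hr0
  have hEr : E r ≠ 0 := hEne r ⟨hra, hrb⟩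
  have hρr : ρ r ≠ 0 := ne_of_gt (hρpos r ⟨hra, hrb⟩)
  have hXne : B r ^ 2 + r ^ 2 * S r ^ 2 ≠ 0 := ne_of_gt (hBS r ⟨hra, hrb⟩)
  have h1 := hconstr1 r ⟨hra, hrb⟩
  have hc := hce r ⟨hra, hrb⟩
  have hd1 : deriv (fun s => s * E s) r = E r + r * deriv E r := by
    rw [deriv_fun_mul differentiableAt_fun_id (hE r ⟨hra, hrb⟩)]
    simp
  have hd3 : deriv (fun s => s ^ 3 * E s) r = 3 * r ^ 2 * E r + r ^ 3 * deriv E r := by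
    rw [deriv_fun_mul (by fun_prop) (hE r ⟨hra, hrb⟩)]
    simp [deriv_pow_field]
  rw [hd1] at h1
  have hAf : deriv A r / A r
      = 2 * B r ^ 2 / (r * (B r ^ 2 + r ^ 2 * S r ^ 2)) + (E r + r * deriv E r) / (r * E r) := by
    linarith
  constructor
  · rw [hd1, hAf, ← hc]
    field_simp
    ring
  · rw [hd3, hAf, ← hc]
    field_simp
    have hX2 : B r ^ 2 + S r ^ 2 * r ^ 2 ≠ 0 := by rwa [mul_comm (S r ^ 2)]
    field_simp
    ring
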